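/- Let A be a cocomplete abelian category and X_1 → X_2 → X_3 → ⋯ a sequence of chain maps of complexes in C(A), each of which is a degree-wise split monomorphism. If every X_i is contractible (i.e., zero in the homotopy category), then the colimit colim_i X_i is contractible. -/

import Mathlib

open CategoryTheory CategoryTheory.Limits

namespace ColimContrAux

variable {A : Type*} [Category A] [Preadditive A] {X Y : ChainComplex A ℤ}

lemma rel1 (i : ℤ) : (ComplexShape.down ℤ).Rel i (i - 1) := by simp [ComplexShape.down_Rel]

lemma rel2 (i : ℤ) : (ComplexShape.down ℤ).Rel (i + 1) i := by simp [ComplexShape.down_Rel]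

lemma contr_eq (s : Homotopy (𝟙 X) 0) (i : ℤ) :
    X.d i (i - 1) ≫ s.hom (i - 1) i + s.hom i (i + 1) ≫ X.d (i + 1) i = 𝟙 (X.X i) := by
  have h := s.comm i
  rw [dNext_eq s.hom (rel1 i), prevD_eq s.hom (rel2 i)] at h
  simpa using h.symm

/-- The chain-map retraction of `f` built from a contraction of `X` and degreewise
retractions `p`. -/
def ecR (f : X ⟶ Y) (p : ∀ i : ℤ, Y.X i ⟶ X.X i) (s : Homotopy (𝟙 X) 0) (i : ℤ) :
    Y.X i ⟶ X.X i :=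
  Y.d i (i - 1) ≫ p (i - 1) ≫ s.hom (i - 1) i + p i ≫ s.hom i (i + 1) ≫ X.d (i + 1) i

variable (f : X ⟶ Y) (p : ∀ i : ℤ, Y.X i ⟶ X.X i) (s : Homotopy (𝟙 X) 0)
  (hp : ∀ i, f.f i ≫ p i = 𝟙 _)

include hp in
lemma ecR_retr (i : ℤ) : f.f i ≫ ecR f p s i = 𝟙 (X.X i) := by
  dsimp only [ecR]
  rw [Preadditive.comp_add]
  rw [← Category.assoc (f.f i) (Y.d i (i - 1)), f.comm i (i - 1), Category.assoc,
    reassoc_of% (hp (i - 1)), reassoc_of% (hp i)]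
  exact contr_eq s i

lemma ecR_comm (i j : ℤ) (hij : j + 1 = i) :
    Y.d i j ≫ ecR f p s j = ecR f p s i ≫ X.d i j := by
  subst hij
  dsimp only [ecR]
  rw [show (j : ℤ) + 1 - 1 = j by ring]
  simp [Preadditive.comp_add, Preadditive.add_comp, Category.assoc]

/-- The idempotent `1 - r ≫ f`. -/
def ecE (i : ℤ) : Y.X i ⟶ Y.X i := 𝟙 (Y.X i) - ecR f p s i ≫ f.f i

lemma ecE_comm (i j : ℤ) (hij : j + 1 = i) :
    Y.d i j ≫ ecE f p s j = ecE f p s i ≫ Y.d i j := by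
  dsimp only [ecE]
  rw [Preadditive.comp_sub, Preadditive.sub_comp, Category.comp_id, Category.id_comp]
  congr 1
  rw [← Category.assoc, ecR_comm f p s i j hij, Category.assoc, ← f.comm, ← Category.assoc]

include hp in
lemma ecE_f (i : ℤ) : f.f i ≫ ecE f p s i = 0 := by
  dsimp only [ecE]
  rw [Preadditive.comp_sub, Category.comp_id, ← Category.assoc, ecR_retr f p s hp,
    Category.id_comp, sub_self]

include hp in
lemma ecE_idem (i : ℤ) : ecE f p s i ≫ ecE f p s i = ecE f p s i := by
  dsimp only [ecE]
  rw [Preadditive.comp_sub, Category.comp_id, Preadditive.sub_comp, Category.id_comp,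
    Category.assoc, ← Category.assoc (f.f i) (ecR f p s i), ecR_retr f p s hp, Category.id_comp]
  abel

end ColimContrAux

open ColimContrAux in
/-- Extend a contraction along a degreewise split mono. -/
noncomputable def extendContraction {A : Type*} [Category A] [Preadditive A]
    {X Y : ChainComplex A ℤ} (f : X ⟶ Y) (hsplit : ∀ i : ℤ, IsSplitMono (f.f i))
    (s : Homotopy (𝟙 X) 0) (u : Homotopy (𝟙 Y) 0) :
    {t : Homotopy (𝟙 Y) 0 // ∀ i j : ℤ, f.f i ≫ t.hom i j = s.hom i j ≫ f.f j} := by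
  let p : ∀ i : ℤ, Y.X i ⟶ X.X i := fun i => retraction (f.f i)
  have hp : ∀ i, f.f i ≫ p i = 𝟙 _ := fun i => IsSplitMono.id _
  refine ⟨⟨fun i j => ecR f p s i ≫ s.hom i j ≫ f.f j + ecE f p s i ≫ u.hom i j ≫ ecE f p s j,
    ?_, ?_⟩, ?_⟩
  · intro i j w
    beta_reduce
    rw [s.zero i j w, u.zero i j w]
    simp
  · intro i
    rw [dNext_eq _ (rel1 i), prevD_eq _ (rel2 i)]
    beta_reduce
    simp only [HomologicalComplex.id_f, HomologicalComplex.zero_f, add_zero]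
    rw [Preadditive.comp_add, Preadditive.add_comp]
    have t1 : Y.d i (i - 1) ≫ ecR f p s (i - 1) ≫ s.hom (i - 1) i ≫ f.f i
        = ecR f p s i ≫ (X.d i (i - 1) ≫ s.hom (i - 1) i) ≫ f.f i := by
      rw [← Category.assoc, ecR_comm f p s i (i - 1) (by ring)]
      simp [Category.assoc]
    have t2 : Y.d i (i - 1) ≫ ecE f p s (i - 1) ≫ u.hom (i - 1) i ≫ ecE f p s i
        = ecE f p s i ≫ (Y.d i (i - 1) ≫ u.hom (i - 1) i) ≫ ecE f p s i := by
      rw [← Category.assoc, ecE_comm f p s i (i - 1) (by ring)]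
      simp [Category.assoc]
    have t3 : (ecR f p s i ≫ s.hom i (i + 1) ≫ f.f (i + 1)) ≫ Y.d (i + 1) i
        = ecR f p s i ≫ (s.hom i (i + 1) ≫ X.d (i + 1) i) ≫ f.f i := by
      simp only [Category.assoc]
      rw [f.comm]
    have t4 : (ecE f p s i ≫ u.hom i (i + 1) ≫ ecE f p s (i + 1)) ≫ Y.d (i + 1) i
        = ecE f p s i ≫ (u.hom i (i + 1) ≫ Y.d (i + 1) i) ≫ ecE f p s i := by
      simp only [Category.assoc]
      rw [← ecE_comm f p s (i + 1) i rfl]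
    rw [t1, t2, t3, t4]
    rw [show ecR f p s i ≫ (X.d i (i - 1) ≫ s.hom (i - 1) i) ≫ f.f i
          + ecE f p s i ≫ (Y.d i (i - 1) ≫ u.hom (i - 1) i) ≫ ecE f p s i
          + (ecR f p s i ≫ (s.hom i (i + 1) ≫ X.d (i + 1) i) ≫ f.f i
          + ecE f p s i ≫ (u.hom i (i + 1) ≫ Y.d (i + 1) i) ≫ ecE f p s i)
        = ecR f p s i ≫ ((X.d i (i - 1) ≫ s.hom (i - 1) i)
            + (s.hom i (i + 1) ≫ X.d (i + 1) i)) ≫ f.f i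
          + ecE f p s i ≫ ((Y.d i (i - 1) ≫ u.hom (i - 1) i)
            + (u.hom i (i + 1) ≫ Y.d (i + 1) i)) ≫ ecE f p s i
        from by simp only [Preadditive.add_comp, Preadditive.comp_add]; abel]
    rw [contr_eq s i, contr_eq u i]
    simp only [Category.id_comp]
    rw [ecE_idem f p s hp]
    dsimp only [ecE]
    abel
  · intro i j
    beta_reduce
    rw [Preadditive.comp_add, ← Category.assoc (f.f i) (ecR f p s i), ecR_retr f p s hp,
      Category.id_comp, ← Category.assoc (f.f i) (ecE f p s i), ecE_f f p s hp,
      zero_comp, add_zero]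

section ContrFam

variable {A : Type*} [Category A] [Preadditive A]
  (F : ℕ ⥤ ChainComplex A ℤ)
  (hsplit : ∀ (n : ℕ) (i : ℤ), IsSplitMono ((F.map (homOfLE (Nat.le_succ n))).f i))
  (hcontr : ∀ n : ℕ, Nonempty (Homotopy (𝟙 (F.obj n)) 0))

/-- A compatible family of contractions, built inductively. -/
noncomputable def contrFam : ∀ n : ℕ, Homotopy (𝟙 (F.obj n)) 0
  | 0 => (hcontr 0).some
  | (n + 1) => (extendContraction (F.map (homOfLE (Nat.le_succ n))) (hsplit n)
      (contrFam n) (hcontr (n + 1)).some).1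

lemma contrFam_compat (n : ℕ) (i j : ℤ) :
    (F.map (homOfLE (Nat.le_succ n))).f i ≫ (contrFam F hsplit hcontr (n + 1)).hom i j
      = (contrFam F hsplit hcontr n).hom i j ≫ (F.map (homOfLE (Nat.le_succ n))).f j := by
  rw [contrFam]
  exact (extendContraction (F.map (homOfLE (Nat.le_succ n))) (hsplit n)
      (contrFam F hsplit hcontr n) (hcontr (n + 1)).some).2 i j

lemma contrFam_nat {n m : ℕ} (h : n ≤ m) (i j : ℤ) :
    (F.map (homOfLE h)).f i ≫ (contrFam F hsplit hcontr m).hom i j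
      = (contrFam F hsplit hcontr n).hom i j ≫ (F.map (homOfLE h)).f j := by
  induction m, h using Nat.le_induction with
  | base =>
      rw [show (homOfLE (le_refl n) : n ⟶ n) = 𝟙 n from rfl, F.map_id]
      simp
  | succ m hm ih =>
      have e : F.map (homOfLE (Nat.le_succ_of_le hm))
          = F.map (homOfLE hm) ≫ F.map (homOfLE (Nat.le_succ m)) := by
        rw [← F.map_comp]
        rfl
      rw [e, HomologicalComplex.comp_f, HomologicalComplex.comp_f, Category.assoc,
        contrFam_compat, ← Category.assoc, ih, Category.assoc]

end ContrFam

/-- Let `A` be a cocomplete abelian category and `X₁ → X₂ → X₃ → ⋯` a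
sequence of chain maps of complexes in `C(A)`, each of which is a degree-wise split
monomorphism.  If every `Xᵢ` is contractible (zero in the homotopy category), then the
colimit `colim Xᵢ` is contractible. -/
theorem colimit_contractible_of_degreewise_split_mono
    (A : Type*) [Category A] [Abelian A] [HasColimits A]
    (F : ℕ ⥤ ChainComplex A ℤ)
    (hsplit : ∀ (n : ℕ) (i : ℤ), IsSplitMono ((F.map (homOfLE (Nat.le_succ n))).f i))
    (hcontr : ∀ n : ℕ, Nonempty (Homotopy (𝟙 (F.obj n)) 0)) :
    Nonempty (Homotopy (𝟙 (colimit F)) 0) := by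
  classical
  set S : ∀ n : ℕ, Homotopy (𝟙 (F.obj n)) 0 := contrFam F hsplit hcontr with hS
  have hnat : ∀ {n m : ℕ} (g : n ⟶ m) (i j : ℤ),
      (F.map g).f i ≫ (S m).hom i j = (S n).hom i j ≫ (F.map g).f j := by
    intro n m g i j
    have hg : g = homOfLE (leOfHom g) := Subsingleton.elim _ _
    rw [hg, hS]
    exact contrFam_nat F hsplit hcontr (leOfHom g) i j
  let E : ℤ → (ChainComplex A ℤ ⥤ A) := fun i =>
    HomologicalComplex.eval A (ComplexShape.down ℤ) i
  have hci : ∀ i : ℤ, IsColimit ((E i).mapCocone (colimit.cocone F)) := fun i =>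
    isColimitOfPreserves (E i) (colimit.isColimit F)
  let cc : ∀ i j : ℤ, Cocone (F ⋙ E i) := fun i j =>
    { pt := (colimit F).X j
      ι :=
        { app := fun n => (S n).hom i j ≫ (colimit.ι F n).f j
          naturality := fun n m g => by
            dsimp [E, HomologicalComplex.eval]
            rw [Category.comp_id, ← Category.assoc, hnat g i j, Category.assoc]
            congr 1
            exact congrArg (fun φ => HomologicalComplex.Hom.f φ j) (colimit.w F g) } }
  let h : ∀ i j : ℤ, (colimit F).X i ⟶ (colimit F).X j := fun i j => (hci i).desc (cc i j)
  have hfac : ∀ (i j : ℤ) (n : ℕ),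
      (colimit.ι F n).f i ≫ h i j = (S n).hom i j ≫ (colimit.ι F n).f j :=
    fun i j n => (hci i).fac (cc i j) n
  refine ⟨⟨h, ?_, ?_⟩⟩
  · intro i j w
    refine (hci i).hom_ext fun n => ?_
    dsimp [E, HomologicalComplex.eval]
    rw [hfac i j n, (S n).zero i j w]
    simp
  · intro i
    rw [dNext_eq _ (ColimContrAux.rel1 i), prevD_eq _ (ColimContrAux.rel2 i)]
    refine (hci i).hom_ext fun n => ?_
    dsimp [E, HomologicalComplex.eval]
    simp only [Category.comp_id, Limits.comp_zero, add_zero, Preadditive.comp_add]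
    rw [show (colimit.ι F n).f i ≫ (colimit F).d i (i - 1) ≫ h (i - 1) i
        = ((F.obj n).d i (i - 1) ≫ (S n).hom (i - 1) i) ≫ (colimit.ι F n).f i from by
      rw [← Category.assoc, (colimit.ι F n).comm i (i - 1), Category.assoc, hfac (i - 1) i n,
        ← Category.assoc]]
    rw [show (colimit.ι F n).f i ≫ h i (i + 1) ≫ (colimit F).d (i + 1) i
        = ((S n).hom i (i + 1) ≫ (F.obj n).d (i + 1) i) ≫ (colimit.ι F n).f i from by
      rw [← Category.assoc, hfac i (i + 1) n, Category.assoc, (colimit.ι F n).comm (i + 1) i,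
        ← Category.assoc]]
    rw [← Preadditive.add_comp, ColimContrAux.contr_eq (S n) i]
    simp
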